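/- For every δ with 0 < δ ≤ 1/2 and every φ ∈ ℝ, the regularized convex energy part satisfies the uniform lower bound f_{1,δ}(φ) ≥ −log 2. -/

import Mathlib

/-- The Flory–Huggins convex energy part `f₁(φ) = φ log φ + (1-φ) log(1-φ)`. -/
noncomputable def f1 (φ : ℝ) : ℝ := φ * Real.log φ + (1 - φ) * Real.log (1 - φ)

/-- The regularized convex energy part `f_{1,δ}`, obtained from `f₁` by quadratic
extension outside `[δ, 1-δ]`, using `f₁'(s) = log(s/(1-s))` and `f₁''(s) = 1/(s(1-s))`. -/
noncomputable def f1d (δ φ : ℝ) : ℝ :=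
  if φ ≤ δ then
    f1 δ + Real.log (δ / (1 - δ)) * (φ - δ) + 1 / (δ * (1 - δ)) * (φ - δ) ^ 2 / 2
  else if φ ≤ 1 - δ then f1 φ
  else
    f1 (1 - δ) + Real.log ((1 - δ) / δ) * (φ - (1 - δ))
      + 1 / (δ * (1 - δ)) * (φ - (1 - δ)) ^ 2 / 2

lemma f1_ge (x : ℝ) (hx : 0 < x) (hx1 : x < 1) : f1 x ≥ -Real.log 2 := by
  have h2x : (0:ℝ) < 2 * x := by linarith
  have h2y : (0:ℝ) < 2 * (1 - x) := by linarith
  have ha : Real.log (2 * x) ≥ 1 - 1 / (2 * x) := by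
    have h := Real.log_le_sub_one_of_pos (show (0:ℝ) < 1 / (2 * x) by positivity)
    rw [Real.log_div one_ne_zero (ne_of_gt h2x), Real.log_one] at h
    linarith
  have hb : Real.log (2 * (1 - x)) ≥ 1 - 1 / (2 * (1 - x)) := by
    have h := Real.log_le_sub_one_of_pos (show (0:ℝ) < 1 / (2 * (1 - x)) by positivity)
    rw [Real.log_div one_ne_zero (ne_of_gt h2y), Real.log_one] at h
    linarith
  have hlx : Real.log (2 * x) = Real.log 2 + Real.log x :=
    Real.log_mul two_ne_zero (ne_of_gt hx)
  have hly : Real.log (2 * (1 - x)) = Real.log 2 + Real.log (1 - x) :=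
    Real.log_mul two_ne_zero (by linarith)
  have ha' : x * Real.log (2 * x) ≥ x - 1 / 2 := by
    have := mul_le_mul_of_nonneg_left ha (le_of_lt hx)
    have hne : (2 * x) ≠ 0 := ne_of_gt h2x
    have : x * (1 - 1 / (2 * x)) = x - 1 / 2 := by field_simp
    nlinarith [mul_le_mul_of_nonneg_left ha (le_of_lt hx)]
  have hb' : (1 - x) * Real.log (2 * (1 - x)) ≥ (1 - x) - 1 / 2 := by
    have : (1 - x) * (1 - 1 / (2 * (1 - x))) = (1 - x) - 1 / 2 := by field_simp [(by linarith : (0:ℝ) < 1 - x).ne']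
    nlinarith [mul_le_mul_of_nonneg_left hb (by linarith : (0:ℝ) ≤ 1 - x)]
  unfold f1
  nlinarith [ha', hb', hlx, hly]

/-- Uniform lower bound `f_{1,δ}(φ) ≥ -log 2`. -/
theorem regularized_energy_lower_bound (δ : ℝ) (hδ0 : 0 < δ) (hδ : δ ≤ 1 / 2) (φ : ℝ) :
    f1d δ φ ≥ -Real.log 2 := by
  have hδ1 : δ < 1 := by linarith
  have h1δ0 : 0 < 1 - δ := by linarith
  have h1δ1 : 1 - δ < 1 := by linarith
  have hfδ : f1 δ ≥ -Real.log 2 := f1_ge δ hδ0 hδ1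
  have hf1δ : f1 (1 - δ) ≥ -Real.log 2 := f1_ge (1 - δ) h1δ0 h1δ1
  unfold f1d
  split_ifs with h1 h2
  · have hlog : Real.log (δ / (1 - δ)) ≤ 0 := by
      apply Real.log_nonpos (by positivity)
      rw [div_le_one h1δ0]; linarith
    have hq : 0 ≤ 1 / (δ * (1 - δ)) * (φ - δ) ^ 2 / 2 := by positivity
    nlinarith [mul_nonneg (neg_nonneg.mpr hlog) (by linarith : (0:ℝ) ≤ δ - φ)]
  · exact f1_ge φ (by linarith) (by linarith)
  · push_neg at h2
    have hlog : 0 ≤ Real.log ((1 - δ) / δ) := by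
      apply Real.log_nonneg
      rw [le_div_iff₀ hδ0]; linarith
    have hq : 0 ≤ 1 / (δ * (1 - δ)) * (φ - (1 - δ)) ^ 2 / 2 := by positivity
    nlinarith [mul_nonneg hlog (by linarith : (0:ℝ) ≤ φ - (1 - δ))]
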